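/- Let Q be a medial quandle generated by a subset X, and fix z ∈ X. Then the group Dis(Q) is generated by the set of all conjugates L^k (L_x L_z^{-1}) L^{-k} for x ∈ X and k ∈ ℤ, where L denotes conjugation by any left translation (which is well-defined since Dis(Q) is abelian). -/

import Mathlib

/-- Let `Q` be a medial quandle generated by `X`, and `z ∈ X`. Then `Dis(Q)` is
generated by the conjugates `L^k (L x * (L z)⁻¹) L^{-k}` for `x ∈ X`, `k ∈ ℤ`,
where conjugation by a left translation is independent of the translation. -/
theorem displacement_generators_of_generated_medial_quandle {Q : Type*}
    (op : Q → Q → Q)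
    (L : Q → Equiv.Perm Q) (hL : ∀ x y, L x y = op x y)
    (hidem : ∀ x, op x x = x)
    (hldist : ∀ x y z, op x (op y z) = op (op x y) (op x z))
    (hmed : ∀ x y u v, op (op x y) (op u v) = op (op x u) (op y v))
    (X : Set Q) (z : Q) (hz : z ∈ X)
    (hgen : ∀ S : Set Q, X ⊆ S →
      (∀ a b, a ∈ S → b ∈ S → op a b ∈ S ∧ (L a)⁻¹ b ∈ S) → ∀ q, q ∈ S) :
    Subgroup.closure {h : Equiv.Perm Q | ∃ x y : Q, h = L x * (L y)⁻¹} =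
      Subgroup.closure {h : Equiv.Perm Q |
        ∃ x ∈ X, ∃ k : ℤ, h = (L z) ^ k * (L x * (L z)⁻¹) * (L z) ^ (-k)} := by
  have conj : ∀ a b : Q, L a * L b * (L a)⁻¹ = L (op a b) := by
    intro a b
    ext y
    simp only [Equiv.Perm.mul_apply]
    rw [hL, hL, hL, hldist]
    congr 1
    rw [← hL]
    exact Equiv.apply_symm_apply (L a) y
  have invconj : ∀ a b : Q, (L a)⁻¹ * L b * L a = L ((L a)⁻¹ b) := by
    intro a b
    have h := conj a ((L a)⁻¹ b)
    rw [← hL, show (L a) ((L a)⁻¹ b) = b from Equiv.apply_symm_apply (L a) b] at h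
    rw [← h]
    group
  have pconj : ∀ (k : ℤ) (a : Q), (L z) ^ k * L a * (L z) ^ (-k) = L (((L z) ^ k) a) := by
    intro k
    induction k using Int.induction_on with
    | zero => intro a; simp
    | succ i ih =>
      intro a
      have e1 : (L z) ^ ((i : ℤ) + 1) = L z * (L z) ^ (i : ℤ) := by
        rw [add_comm, zpow_add, zpow_one]
      have : (L z) ^ ((i : ℤ) + 1) * L a * (L z) ^ (-((i : ℤ) + 1))
          = L z * ((L z) ^ (i : ℤ) * L a * (L z) ^ (-(i : ℤ))) * (L z)⁻¹ := by group
      rw [this, ih a, conj z _, e1, Equiv.Perm.mul_apply, hL]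
    | pred i ih =>
      intro a
      have e1 : (L z) ^ (-(i : ℤ) - 1) = (L z)⁻¹ * (L z) ^ (-(i : ℤ)) := by
        rw [sub_eq_add_neg, add_comm, zpow_add, zpow_neg_one]
      have : (L z) ^ (-(i : ℤ) - 1) * L a * (L z) ^ (-(-(i : ℤ) - 1))
          = (L z)⁻¹ * ((L z) ^ (-(i : ℤ)) * L a * (L z) ^ (-(-(i : ℤ)))) * L z := by group
      rw [this, ih a, invconj z _, e1, Equiv.Perm.mul_apply]
  apply le_antisymm
  · rw [Subgroup.closure_le]
    rintro h ⟨x, y, rfl⟩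
    set N := Subgroup.closure {h : Equiv.Perm Q |
        ∃ x ∈ X, ∃ k : ℤ, h = (L z) ^ k * (L x * (L z)⁻¹) * (L z) ^ (-k)} with hN
    set S : Set Q := {q | ∀ k : ℤ, (L z) ^ k * (L q * (L z)⁻¹) * (L z) ^ (-k) ∈ N} with hS
    have hall : ∀ q, q ∈ S := by
      apply hgen
      · intro x hx k
        exact Subgroup.subset_closure ⟨x, hx, k, rfl⟩
      · intro a b ha hb
        constructor
        · intro k
          rw [← conj a b]
          have : (L z) ^ k * ((L a * L b * (L a)⁻¹) * (L z)⁻¹) * (L z) ^ (-k)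
              = ((L z) ^ k * (L a * (L z)⁻¹) * (L z) ^ (-k)) *
                ((L z) ^ (k + 1) * (L b * (L z)⁻¹) * (L z) ^ (-(k + 1))) *
                ((L z) ^ (k + 1) * (L a * (L z)⁻¹) * (L z) ^ (-(k + 1)))⁻¹ := by group
          rw [this]
          exact mul_mem (mul_mem (ha k) (hb (k + 1))) (inv_mem (ha (k + 1)))
        · intro k
          rw [← invconj a b]
          have : (L z) ^ k * (((L a)⁻¹ * L b * L a) * (L z)⁻¹) * (L z) ^ (-k)
              = ((L z) ^ (k - 1) * (L a * (L z)⁻¹) * (L z) ^ (-(k - 1)))⁻¹ *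
                ((L z) ^ (k - 1) * (L b * (L z)⁻¹) * (L z) ^ (-(k - 1))) *
                ((L z) ^ k * (L a * (L z)⁻¹) * (L z) ^ (-k)) := by group
          rw [this]
          exact mul_mem (mul_mem (inv_mem (ha (k - 1))) (hb (k - 1))) (ha k)
    have hx := hall x 0
    have hy := hall y 0
    simp only [zpow_zero, one_mul, mul_one, neg_zero] at hx hy
    have : L x * (L y)⁻¹ = (L x * (L z)⁻¹) * (L y * (L z)⁻¹)⁻¹ := by group
    rw [this]
    exact mul_mem hx (inv_mem hy)
  · rw [Subgroup.closure_le]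
    rintro h ⟨x, hx, k, rfl⟩
    have : (L z) ^ k * (L x * (L z)⁻¹) * (L z) ^ (-k)
        = ((L z) ^ k * L x * (L z) ^ (-k)) * (L z)⁻¹ := by group
    rw [this, pconj k x]
    exact Subgroup.subset_closure ⟨((L z) ^ k) x, z, rfl⟩
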